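/- The entropy of the stationary killed chain decomposes as h(𝕐^{(𝒦)}) = h(𝕐) + Δ(B), where h(𝕐) = -∑_{i,j∈I} μ(i) Q(i,j) log Q(i,j), h(𝕐^{(𝒦)}) = -∑_{(i,j,a)} ζ(i,j,a) ∑_{(k,b)} 𝒦((i,j,a),(j,k,b)) log 𝒦((i,j,a),(j,k,b)), and Δ(B) = -∑_{i,j∈I} μ(i) Q(i,j) (θ_{i,j} log θ_{i,j} + (1-θ_{i,j}) log(1-θ_{i,j})) with θ_{i,j} = P(i,j)/Q(i,j). -/

import Mathlib

open Finset Matrix Real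

lemma aux_negMulLog_split (p q : ℝ) (hp : 0 ≤ p) (hq : 0 ≤ q) :
    negMulLog p + negMulLog q
      = negMulLog (p + q)
        + (p + q) * (negMulLog (p / (p + q)) + negMulLog (1 - p / (p + q))) := by
  rcases (by positivity : (0:ℝ) ≤ p + q).eq_or_lt with h | h
  · have hp0 : p = 0 := by linarith
    have hq0 : q = 0 := by linarith
    simp [hp0, hq0]
  · have hQ : p + q ≠ 0 := ne_of_gt h
    have h1 : 1 - p / (p + q) = q / (p + q) := by field_simp; ring
    rw [h1]
    rcases hp.eq_or_lt with hp0 | hp0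
    · have hq' : q ≠ 0 := by intro h0; exact hQ (by rw [← hp0, h0]; ring)
      rw [← hp0]
      simp [div_self hq']
    · rcases hq.eq_or_lt with hq0 | hq0
      · have hp' : p ≠ 0 := by intro h0; exact hQ (by rw [← hq0, h0]; ring)
        rw [← hq0]
        simp [div_self hp']
      · unfold Real.negMulLog
        rw [Real.log_div (ne_of_gt hp0) hQ, Real.log_div (ne_of_gt hq0) hQ]
        field_simp
        ring


/-- The entropy of the stationary killed chain decomposes as
h(𝕐^{(𝒦)}) = h(𝕐) + Δ(B), where h(𝕐) = -∑ μ(i)Q(i,j)log Q(i,j),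
h(𝕐^{(𝒦)}) = -∑_x ζ(x) ∑_y 𝒦(x,y) log 𝒦(x,y), and
Δ(B) = -∑ μ(i)Q(i,j)(θ_{i,j}log θ_{i,j} + (1-θ_{i,j})log(1-θ_{i,j})),
θ_{i,j} = P(i,j)/Q(i,j), with the convention 0 log 0 = 0 (via negMulLog). -/
theorem killed_entropy_decomposition {I E : Type*} [Fintype I] [Fintype E]
    [DecidableEq I] [DecidableEq E] [Nonempty I] [Nonempty E]
    (P : Matrix (I ⊕ E) (I ⊕ E) ℝ)
    (hP0 : ∀ a b, 0 ≤ P a b)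
    (hP1 : ∀ a, ∑ b, P a b = 1)
    (habs : ∀ (ε : E) (b : I ⊕ E), P (Sum.inr ε) b = if b = Sum.inr ε then 1 else 0)
    (hirr : ∀ i j : I, ∃ n : ℕ, 0 < ((P.submatrix Sum.inl Sum.inl) ^ n) i j)
    (hsub : 0 < ∑ i : I, ∑ ε : E, P (Sum.inl i) (Sum.inr ε))
    (μ : I → ℝ) (hμ0 : ∀ i, 0 ≤ μ i) (hμ1 : ∑ i, μ i = 1)
    (γ : ℝ) (hγ : 0 < γ ∧ γ < 1)
    (hqsd : μ ᵥ* (P.submatrix Sum.inl Sum.inl) = γ • μ)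
    (Q : Matrix I I ℝ)
    (hQ : ∀ i j, Q i j = P (Sum.inl i) (Sum.inl j)
        + (∑ ε : E, P (Sum.inl i) (Sum.inr ε)) * μ j)
    (θ : I → I → ℝ)
    (hθ : ∀ i j, θ i j = P (Sum.inl i) (Sum.inl j) / Q i j)
    (K : I × I × Bool → I × I × Bool → ℝ)
    (hK : ∀ (i j l k : I) (a b : Bool),
      K (i, j, a) (l, k, b)
        = if l = j then
            (if b then P (Sum.inl j) (Sum.inl k)
             else (∑ ε : E, P (Sum.inl j) (Sum.inr ε)) * μ k)
          else 0)
    (ζ : I × I × Bool → ℝ)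
    (hζ : ∀ (i j : I) (a : Bool),
      ζ (i, j, a)
        = if a then μ i * P (Sum.inl i) (Sum.inl j)
          else μ i * (∑ ε : E, P (Sum.inl i) (Sum.inr ε)) * μ j) :
    (∑ x : I × I × Bool, ζ x * ∑ y : I × I × Bool, negMulLog (K x y))
      = (∑ i : I, ∑ j : I, μ i * negMulLog (Q i j))
        + ∑ i : I, ∑ j : I,
            μ i * Q i j * (negMulLog (θ i j) + negMulLog (1 - θ i j)) := by
  -- quasi-stationarity in coordinates
  have hmuP : ∀ j, ∑ i, μ i * P (Sum.inl i) (Sum.inl j) = γ * μ j := by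
    intro j
    have h := congrFun hqsd j
    simpa [Matrix.vecMul, dotProduct, Matrix.submatrix] using h
  have hmus : ∑ i, μ i * (∑ ε : E, P (Sum.inl i) (Sum.inr ε)) = 1 - γ := by
    have hrow : ∀ i : I, (∑ ε : E, P (Sum.inl i) (Sum.inr ε))
        = 1 - ∑ k : I, P (Sum.inl i) (Sum.inl k) := by
      intro i
      have h := hP1 (Sum.inl i)
      rw [Fintype.sum_sum_type] at h
      linarith
    calc ∑ i, μ i * (∑ ε : E, P (Sum.inl i) (Sum.inr ε))
        = ∑ i, (μ i - ∑ k, μ i * P (Sum.inl i) (Sum.inl k)) := by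
          refine Finset.sum_congr rfl fun i _ => ?_
          rw [hrow i, mul_sub, mul_one, Finset.mul_sum]
      _ = 1 - ∑ k, ∑ i, μ i * P (Sum.inl i) (Sum.inl k) := by
          rw [Finset.sum_sub_distrib, hμ1, Finset.sum_comm]
      _ = 1 - γ := by
          simp only [hmuP]
          rw [← Finset.mul_sum, hμ1, mul_one]
  have hstat : ∀ j, ∑ i, μ i * Q i j = μ j := by
    intro j
    have h : ∑ i, μ i * Q i j
        = ∑ i, μ i * P (Sum.inl i) (Sum.inl j)
          + (∑ i, μ i * (∑ ε : E, P (Sum.inl i) (Sum.inr ε))) * μ j := by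
      rw [Finset.sum_mul, ← Finset.sum_add_distrib]
      refine Finset.sum_congr rfl fun i _ => ?_
      rw [hQ]; ring
    rw [h, hmuP, hmus]; ring
  -- inner sum over the killed kernel
  have hinner : ∀ (i j : I) (a : Bool),
      (∑ y : I × I × Bool, negMulLog (K (i, j, a) y))
        = ∑ k, (negMulLog (P (Sum.inl j) (Sum.inl k))
            + negMulLog ((∑ ε : E, P (Sum.inl j) (Sum.inr ε)) * μ k)) := by
    intro i j a
    rw [Fintype.sum_prod_type]
    rw [Finset.sum_eq_single j]
    · rw [Fintype.sum_prod_type]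
      refine Finset.sum_congr rfl fun k _ => ?_
      rw [Fintype.sum_bool]
      simp [hK]
    · intro l _ hl
      rw [Fintype.sum_prod_type]
      simp [hK, hl]
    · intro h; exact absurd (Finset.mem_univ j) h
  calc (∑ x : I × I × Bool, ζ x * ∑ y : I × I × Bool, negMulLog (K x y))
      = ∑ i, ∑ j, μ i * Q i j
          * ∑ k, (negMulLog (P (Sum.inl j) (Sum.inl k))
              + negMulLog ((∑ ε : E, P (Sum.inl j) (Sum.inr ε)) * μ k)) := by
        rw [Fintype.sum_prod_type]
        refine Finset.sum_congr rfl fun i _ => ?_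
        rw [Fintype.sum_prod_type]
        refine Finset.sum_congr rfl fun j _ => ?_
        rw [Fintype.sum_bool, hinner i j true, hinner i j false,
          hζ i j true, hζ i j false, hQ]
        simp only [if_true, if_false, Bool.false_eq_true]
        ring
    _ = ∑ j, (∑ i, μ i * Q i j)
          * ∑ k, (negMulLog (P (Sum.inl j) (Sum.inl k))
              + negMulLog ((∑ ε : E, P (Sum.inl j) (Sum.inr ε)) * μ k)) := by
        rw [Finset.sum_comm]
        exact Finset.sum_congr rfl fun j _ => (Finset.sum_mul _ _ _).symm
    _ = ∑ j, ∑ k, μ j * (negMulLog (P (Sum.inl j) (Sum.inl k))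
              + negMulLog ((∑ ε : E, P (Sum.inl j) (Sum.inr ε)) * μ k)) := by
        refine Finset.sum_congr rfl fun j _ => ?_
        rw [hstat, Finset.mul_sum]
    _ = (∑ i : I, ∑ j : I, μ i * negMulLog (Q i j))
        + ∑ i : I, ∑ j : I,
            μ i * Q i j * (negMulLog (θ i j) + negMulLog (1 - θ i j)) := by
        rw [← Finset.sum_add_distrib]
        refine Finset.sum_congr rfl fun j _ => ?_
        rw [← Finset.sum_add_distrib]
        refine Finset.sum_congr rfl fun k _ => ?_
        have key := aux_negMulLog_split (P (Sum.inl j) (Sum.inl k))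
          ((∑ ε : E, P (Sum.inl j) (Sum.inr ε)) * μ k) (hP0 _ _)
          (mul_nonneg (Finset.sum_nonneg fun ε _ => hP0 _ _) (hμ0 k))
        rw [hθ j k, hQ j k, key]
        ring
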